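/- Let (A, m) → (R, n) be a flat local morphism of Noetherian local rings. Then the integral closure satisfies R̄ ⊗_A Q(A) = closure of R ⊗_A Q(A) in its total quotient ring; in particular, if R is normal then R ⊗_A Q(A) is normal. -/

import Mathlib

set_option synthInstance.maxHeartbeats 1000000
set_option maxHeartbeats 1000000

noncomputable section

/-- The total quotient ring `Q(R)`. -/
abbrev QR (R : Type*) [CommRing R] := Localization (nonZeroDivisors R)

noncomputable instance algAQR (A R : Type*) [CommRing A] [CommRing R] [Algebra A R] :
    Algebra A (QR R) :=
  ((algebraMap R (QR R)).comp (algebraMap A R)).toAlgebra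

section Aux

variable (A R : Type*) [CommRing A] [IsDomain A] [CommRing R] [Algebra A R] [Module.Flat A R]

lemma map_nzd {a : A} (ha : a ∈ nonZeroDivisors A) : algebraMap A R a ∈ nonZeroDivisors R := by
  have ha0 : a ≠ 0 := nonZeroDivisors.ne_zero ha
  have hreg : IsSMulRegular A a := fun x y h => by
    simpa using mul_left_cancel₀ ha0 (by simpa [smul_eq_mul] using h)
  have hR : IsSMulRegular R a := by
    have h1 := hreg.rTensor (R := A) (M := R)
    exact (Equiv.isSMulRegular_congr (e := (TensorProduct.lid A R).toEquiv)
      (fun x => (TensorProduct.lid A R).map_smul a x)).mp h1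
  rw [mem_nonZeroDivisors_iff_right]
  intro x hx
  refine hR (show a • x = a • (0 : R) from ?_)
  simpa [Algebra.smul_def, mul_comm] using hx

lemma rinj' : Function.Injective (algebraMap R (QR R)) := by
  have h := @IsLocalization.injective R _ (nonZeroDivisors R) (QR R) _
    OreLocalization.instAlgebra (Localization.isLocalization) le_rfl
  exact h

lemma unit_of_nzd {a : A} (ha : a ∈ nonZeroDivisors A) :
    IsUnit (algebraMap A (QR R) a) := by
  have h := @IsLocalization.map_units R _ (nonZeroDivisors R) (QR R) _
    OreLocalization.instAlgebra (Localization.isLocalization) ⟨algebraMap A R a, map_nzd A R ha⟩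
  exact h

end Aux

/-- The image of `R ⊗_A Q(A)` in `Q(R)`: elements `x` with `a·x ∈ R` for some
non-zerodivisor `a ∈ A`. -/
def QAimage (A R : Type*) [CommRing A] [CommRing R] [Algebra A R] : Subalgebra A (QR R) where
  carrier := {x | ∃ r : R, ∃ a ∈ nonZeroDivisors A, algebraMap A (QR R) a * x = algebraMap R (QR R) r}
  zero_mem' := ⟨0, 1, one_mem _, by simp⟩
  one_mem' := ⟨1, 1, one_mem _, by simp⟩
  add_mem' := by
    rintro x y ⟨r, a, ha, hx⟩ ⟨s, b, hb, hy⟩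
    refine ⟨algebraMap A R b * r + algebraMap A R a * s, a * b, mul_mem ha hb, ?_⟩
    have h1 : algebraMap A (QR R) a = algebraMap R (QR R) (algebraMap A R a) := rfl
    have h2 : algebraMap A (QR R) b = algebraMap R (QR R) (algebraMap A R b) := rfl
    rw [map_mul, map_add, map_mul, map_mul, ← h1, ← h2, ← hx, ← hy]
    ring
  mul_mem' := by
    rintro x y ⟨r, a, ha, hx⟩ ⟨s, b, hb, hy⟩
    refine ⟨r * s, a * b, mul_mem ha hb, ?_⟩
    rw [map_mul, map_mul, ← hx, ← hy]
    ring
  algebraMap_mem' := fun a =>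
    ⟨algebraMap A R a, 1, one_mem _, by rw [map_one, one_mul]; rfl⟩

section Loc

variable (A R : Type*) [CommRing A] [IsDomain A] [CommRing R] [Algebra A R] [Module.Flat A R]

def Msub : Submonoid R := (nonZeroDivisors A).map (algebraMap A R)

def toQA : R →+* QAimage A R where
  toFun r := ⟨algebraMap R (QR R) r, r, 1, one_mem _, by simp⟩
  map_one' := Subtype.ext (map_one _)
  map_mul' x y := Subtype.ext (map_mul _ x y)
  map_zero' := Subtype.ext (map_zero _)
  map_add' x y := Subtype.ext (map_add _ x y)

noncomputable instance algRQA : Algebra R (QAimage A R) := (toQA A R).toAlgebra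

instance tower2 : @IsScalarTower R (QAimage A R) (QR R) Algebra.toSMul Algebra.toSMul Algebra.toSMul :=
  IsScalarTower.of_algebraMap_eq (fun r => rfl)

instance locQA : IsLocalization (Msub A R) (QAimage A R) where
  map_units := by
    rintro ⟨s, a, ha, rfl⟩
    have hu := unit_of_nzd A R ha
    obtain ⟨v, hv⟩ := hu.exists_right_inv
    have hvm : v ∈ QAimage A R := ⟨1, a, ha, by rw [hv, map_one]⟩
    refine isUnit_iff_exists_inv.mpr ⟨⟨v, hvm⟩, Subtype.ext ?_⟩
    exact hv
  surj := by
    rintro ⟨z, r, a, ha, hz⟩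
    refine ⟨(r, ⟨algebraMap A R a, a, ha, rfl⟩), Subtype.ext ?_⟩
    show z * algebraMap R (QR R) (algebraMap A R a) = algebraMap R (QR R) r
    rw [mul_comm]
    exact hz
  exists_of_eq := by
    intro x y h
    exact ⟨1, by rw [rinj' R (congrArg Subtype.val h)]⟩

lemma forward (x : QR R) (hx : IsIntegral (QAimage A R) x) :
    ∃ a ∈ nonZeroDivisors A, IsIntegral R (algebraMap A (QR R) a * x) := by
  obtain ⟨m, hm⟩ := hx.exists_multiple_integral_of_isLocalization (M := Msub A R) x
  obtain ⟨a, ha, hma⟩ := m.2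
  refine ⟨a, ha, ?_⟩
  letI : SMul R (QR R) := @Algebra.toSMul R (QR R) _ _ (algAQR R R)
  have h : (algebraMap A (QR R)) a * x = m • x := by
    rw [Submonoid.smul_def, ← hma, @Algebra.smul_def R (QR R) _ _ (algAQR R R)]
    rfl
  rw [h]; exact hm

end Loc

/-- Let `(A, m) → (R, n)` be a flat local morphism of Noetherian local rings, `A` a domain
with fraction field `Q(A)` and `R` reduced. Then `R̄ ⊗_A Q(A)` is the integral closure of
`R ⊗_A Q(A)` in its total quotient ring `Q(R ⊗_A Q(A)) = Q(R)`; in particular, if `R` is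
normal then `R ⊗_A Q(A)` is normal. -/
theorem stmt12 (A R : Type*) [CommRing A] [IsDomain A] [IsLocalRing A]
    [CommRing R] [IsNoetherianRing R] [IsLocalRing R] [IsReduced R]
    [Algebra A R] [Module.Flat A R] [IsLocalHom (algebraMap A R)] :
    (∀ x : QR R,
      IsIntegral (QAimage A R) x ↔
        ∃ y ∈ integralClosure R (QR R), ∃ a ∈ nonZeroDivisors A,
          algebraMap A (QR R) a * x = y) ∧
    (IsIntegrallyClosedIn R (QR R) →
      ∀ x : QR R, IsIntegral (QAimage A R) x → x ∈ QAimage A R) := by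
  have fwd : ∀ x : QR R,
      IsIntegral (QAimage A R) x ↔
        ∃ y ∈ integralClosure R (QR R), ∃ a ∈ nonZeroDivisors A,
          algebraMap A (QR R) a * x = y := by
    intro x
    constructor
    · intro hx
      obtain ⟨a, ha, hint⟩ := forward A R x hx
      exact ⟨_, hint, a, ha, rfl⟩
    · rintro ⟨y, hy, a, ha, hax⟩
      have hu := unit_of_nzd A R ha
      have huv : (hu.unit : QR R) = algebraMap A (QR R) a := rfl
      have hx : x = (↑hu.unit⁻¹ : QR R) * y := by
        rw [← hax]
        exact (Units.inv_mul_cancel_left hu.unit x).symm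
      have hvmem : (↑hu.unit⁻¹ : QR R) ∈ QAimage A R :=
        ⟨1, a, ha, by rw [map_one]; exact hu.unit.mul_inv⟩
      have hy' : IsIntegral (QAimage A R) y := IsIntegral.tower_top (A := QAimage A R) hy
      have h1 : IsIntegral (QAimage A R) (↑hu.unit⁻¹ : QR R) :=
        isIntegral_algebraMap (x := (⟨(↑hu.unit⁻¹ : QR R), hvmem⟩ : QAimage A R))
      rw [hx]
      exact h1.mul hy'
  refine ⟨fwd, ?_⟩
  intro hcl x hx
  obtain ⟨y, hy, a, ha, hax⟩ := (fwd x).mp hx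
  haveI := hcl
  obtain ⟨r, hr⟩ := IsIntegrallyClosedIn.isIntegral_iff.mp hy
  exact ⟨r, a, ha, by rw [hax, ← hr]⟩
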